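/- In the forwarding setting, let (z, w) : [0,∞) → ℝⁿ × H be continuously differentiable and satisfy the closed-loop equations z′(t) = Az(t) + Bσ(u(t)) and w′(t) = Sw(t) + Γ(Cz(t)) with u(t) = −Bᵀ(Pz(t) − M*(w(t) − Mz(t))). Then for every T ≥ 0: V(z(T), w(T)) + ∫₀ᵀ |z(s)|² ds + 2∫₀ᵀ σ(u(s))ᵀu(s) ds ≤ V(z(0), w(0)). In particular, t ↦ V(z(t), w(t)) is nonincreasing. -/

import Mathlib

open scoped RealInnerProductSpace
open ContinuousLinearMap MeasureTheory

set_option maxHeartbeats 1000000 in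
/-- Forwarding setting: along any continuously differentiable closed-loop trajectory
`(z,w)` on `[0,∞)`, the Lyapunov function `V(z,w) = zᵀPz + ‖w − Mz‖²` satisfies, for
every `T ≥ 0`, `V(z(T),w(T)) + ∫₀ᵀ|z|² + 2∫₀ᵀ σ(u)ᵀu ≤ V(z(0),w(0))`; in particular
`t ↦ V(z(t),w(t))` is nonincreasing on `[0,∞)`. -/
theorem statement14 {H : Type*} [NormedAddCommGroup H] [InnerProductSpace ℝ H]
    [CompleteSpace H] (n m p : ℕ)
    (S : H →L[ℝ] H) (hS : ∀ h : H, ⟪S h, h⟫ ≤ 0)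
    (A : EuclideanSpace ℝ (Fin n) →L[ℝ] EuclideanSpace ℝ (Fin n))
    (B : EuclideanSpace ℝ (Fin m) →L[ℝ] EuclideanSpace ℝ (Fin n))
    (C : EuclideanSpace ℝ (Fin n) →L[ℝ] EuclideanSpace ℝ (Fin p))
    (P : EuclideanSpace ℝ (Fin n) →L[ℝ] EuclideanSpace ℝ (Fin n))
    (hPsym : IsSelfAdjoint P)
    (hPpos : ∀ z : EuclideanSpace ℝ (Fin n), z ≠ 0 → 0 < ⟪P z, z⟫)
    (hLyap : P ∘L A + adjoint A ∘L P = -ContinuousLinearMap.id ℝ (EuclideanSpace ℝ (Fin n)))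
    (Γ : EuclideanSpace ℝ (Fin p) →L[ℝ] H)
    (M : EuclideanSpace ℝ (Fin n) →L[ℝ] H)
    (hSyl : ∀ z : EuclideanSpace ℝ (Fin n), S (M z) - M (A z) = -(Γ (C z)))
    (σ : EuclideanSpace ℝ (Fin m) → EuclideanSpace ℝ (Fin m)) (L : ℝ)
    (hσcont : Continuous σ) (hσzero : ∀ s, σ s = 0 ↔ s = 0)
    (hσmono : ∀ s₁ s₂, 0 ≤ ⟪σ s₁ - σ s₂, s₁ - s₂⟫)
    (hL : 0 < L) (hσlin : ∀ s, ‖σ s‖ ≤ L * ‖s‖)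
    -- the continuously differentiable closed-loop trajectory, with feedback u:
    (z : ℝ → EuclideanSpace ℝ (Fin n)) (w : ℝ → H)
    (u : ℝ → EuclideanSpace ℝ (Fin m))
    (hu : ∀ t : ℝ, u t = -(adjoint B) (P (z t) - adjoint M (w t - M (z t))))
    (hz : ∀ t ∈ Set.Ici (0:ℝ),
      HasDerivWithinAt z (A (z t) + B (σ (u t))) (Set.Ici 0) t)
    (hw : ∀ t ∈ Set.Ici (0:ℝ),
      HasDerivWithinAt w (S (w t) + Γ (C (z t))) (Set.Ici 0) t) :
    (∀ T : ℝ, 0 ≤ T →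
      (⟪z T, P (z T)⟫ + ‖w T - M (z T)‖ ^ 2)
          + (∫ s in (0:ℝ)..T, ‖z s‖ ^ 2)
          + 2 * ∫ s in (0:ℝ)..T, ⟪σ (u s), u s⟫
        ≤ ⟪z 0, P (z 0)⟫ + ‖w 0 - M (z 0)‖ ^ 2) ∧
    AntitoneOn (fun t => ⟪z t, P (z t)⟫ + ‖w t - M (z t)‖ ^ 2) (Set.Ici 0) := by
  have hPadj : adjoint P = P := hPsym
  have hL1 : ∀ x, P (A x) + adjoint A (P x) = -x := by
    intro x
    have := congrArg (fun T => T x) hLyap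
    simpa using this
  -- continuity facts
  have hzc : ContinuousOn z (Set.Ici 0) := fun t ht => (hz t ht).continuousWithinAt
  have hwc : ContinuousOn w (Set.Ici 0) := fun t ht => (hw t ht).continuousWithinAt
  have hec : ContinuousOn (fun t => w t - M (z t)) (Set.Ici 0) :=
    hwc.sub (M.continuous.comp_continuousOn hzc)
  have huc : ContinuousOn u (Set.Ici 0) := by
    have hue : u = fun t => -(adjoint B) (P (z t) - adjoint M (w t - M (z t))) := funext hu
    rw [hue]
    exact ((adjoint B).continuous.comp_continuousOn
      ((P.continuous.comp_continuousOn hzc).sub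
        ((adjoint M).continuous.comp_continuousOn hec))).neg
  -- the Lyapunov function and its derivative
  set V : ℝ → ℝ := fun t => ⟪z t, P (z t)⟫ + ‖w t - M (z t)‖ ^ 2 with hVdef
  set g : ℝ → ℝ := fun t => -‖z t‖ ^ 2 - 2 * ⟪σ (u t), u t⟫
      + 2 * ⟪S (w t - M (z t)), w t - M (z t)⟫ with hgdef
  have hgc : ContinuousOn g (Set.Ici 0) := by
    have h1 : ContinuousOn (fun t => ⟪σ (u t), u t⟫) (Set.Ici 0) :=
      (hσcont.comp_continuousOn huc).inner huc
    have h2 : ContinuousOn (fun t => (‖z t‖ : ℝ) ^ 2) (Set.Ici 0) := (hzc.norm).pow 2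
    have h3 : ContinuousOn (fun t => ⟪S (w t - M (z t)), w t - M (z t)⟫) (Set.Ici 0) :=
      (S.continuous.comp_continuousOn hec).inner hec
    exact ((h2.neg).sub (continuousOn_const.mul h1)).add (continuousOn_const.mul h3)
  have hVd : ∀ t ∈ Set.Ici (0:ℝ), HasDerivWithinAt V (g t) (Set.Ici 0) t := by
    intro t ht
    have hz' := hz t ht
    have he' : HasDerivWithinAt (fun t => w t - M (z t))
        (S (w t - M (z t)) - M (B (σ (u t)))) (Set.Ici 0) t := by
      have h1 := (hw t ht).sub ((M.hasFDerivAt).comp_hasDerivWithinAt t hz')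
      convert h1 using 1
      · rfl
      have h := hSyl (z t)
      have h2 : S (M (z t)) = -(Γ (C (z t))) + M (A (z t)) := sub_eq_iff_eq_add.mp h
      simp only [map_sub, map_add, h2]
      abel
    have hd1 : HasDerivWithinAt (fun t => ⟪z t, P (z t)⟫)
        (⟪z t, P (A (z t) + B (σ (u t)))⟫ + ⟪A (z t) + B (σ (u t)), P (z t)⟫)
        (Set.Ici 0) t :=
      HasDerivWithinAt.inner ℝ hz' ((P.hasFDerivAt).comp_hasDerivWithinAt t hz')
    have hd2 := he'.norm_sq
    have key : ⟪z t, P (A (z t) + B (σ (u t)))⟫ + ⟪A (z t) + B (σ (u t)), P (z t)⟫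
        + 2 * ⟪w t - M (z t), S (w t - M (z t)) - M (B (σ (u t)))⟫ = g t := by
      show _ = -‖z t‖ ^ 2 - 2 * ⟪σ (u t), u t⟫
        + 2 * ⟪S (w t - M (z t)), w t - M (z t)⟫
      have e1 : ⟪z t, P (A (z t))⟫ + ⟪A (z t), P (z t)⟫ = -‖z t‖ ^ 2 := by
        have h := hL1 (z t)
        have h1 : ⟪z t, P (A (z t)) + adjoint A (P (z t))⟫ = -‖z t‖ ^ 2 := by
          rw [h, inner_neg_right, real_inner_self_eq_norm_sq]
        rw [inner_add_right] at h1
        have h2 : ⟪z t, adjoint A (P (z t))⟫ = ⟪A (z t), P (z t)⟫ :=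
          adjoint_inner_right A (z t) (P (z t))
        linarith
      have e3 : ⟪B (σ (u t)), P (z t)⟫ = ⟪σ (u t), adjoint B (P (z t))⟫ :=
        (adjoint_inner_right B (σ (u t)) (P (z t))).symm
      have e2 : ⟪z t, P (B (σ (u t)))⟫ = ⟪σ (u t), adjoint B (P (z t))⟫ := by
        rw [← adjoint_inner_left P (B (σ (u t))) (z t), hPadj,
          real_inner_comm (B (σ (u t))) (P (z t))]
        exact e3
      have e4 : ⟪w t - M (z t), M (B (σ (u t)))⟫
          = ⟪σ (u t), adjoint B (adjoint M (w t - M (z t)))⟫ := by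
        rw [real_inner_comm, ← adjoint_inner_right M (B (σ (u t))) (w t - M (z t)),
          ← adjoint_inner_right B (σ (u t)) (adjoint M (w t - M (z t)))]
      have e5 : ⟪σ (u t), u t⟫ = ⟪σ (u t), adjoint B (adjoint M (w t - M (z t)))⟫
          - ⟪σ (u t), adjoint B (P (z t))⟫ := by
        rw [hu t, inner_neg_right, map_sub, inner_sub_right]
        ring
      have e6 : ⟪w t - M (z t), S (w t - M (z t))⟫ = ⟪S (w t - M (z t)), w t - M (z t)⟫ :=
        real_inner_comm _ _
      have E1 : ⟪z t, P (A (z t) + B (σ (u t)))⟫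
          = ⟪z t, P (A (z t))⟫ + ⟪z t, P (B (σ (u t)))⟫ := by
        rw [map_add, inner_add_right]
      have E2 : ⟪A (z t) + B (σ (u t)), P (z t)⟫
          = ⟪A (z t), P (z t)⟫ + ⟪B (σ (u t)), P (z t)⟫ := inner_add_left _ _ _
      have E3 : ⟪w t - M (z t), S (w t - M (z t)) - M (B (σ (u t)))⟫
          = ⟪w t - M (z t), S (w t - M (z t))⟫ - ⟪w t - M (z t), M (B (σ (u t)))⟫ :=
        inner_sub_right _ _ _
      rw [E1, E2, E3]
      linarith
    have := hd1.add hd2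
    rw [← key]
    exact this
  -- Fundamental theorem of calculus on [a,b] ⊆ [0,∞)
  have key : ∀ a b : ℝ, 0 ≤ a → a ≤ b → V b - V a = ∫ s in a..b, g s := by
    intro a b ha hab
    have hsub : Set.Icc a b ⊆ Set.Ici (0:ℝ) := fun x hx => le_trans ha hx.1
    have hVc : ContinuousOn V (Set.Icc a b) :=
      fun x hx => ((hVd x (hsub hx)).continuousWithinAt).mono hsub
    have hderiv : ∀ x ∈ Set.Ioo a b, HasDerivWithinAt V (g x) (Set.Ioi x) x := by
      intro x hx
      exact (hVd x (le_trans ha hx.1.le)).mono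
        (fun y hy => le_trans (le_trans ha hx.1.le) (le_of_lt hy))
    have hgint : IntervalIntegrable g volume a b := by
      apply ContinuousOn.intervalIntegrable
      rw [Set.uIcc_of_le hab]
      exact hgc.mono hsub
    exact (intervalIntegral.integral_eq_sub_of_hasDeriv_right_of_le hab hVc hderiv hgint).symm
  -- integrability of the pieces on subintervals of [0,∞)
  have hint : ∀ (f : ℝ → ℝ), ContinuousOn f (Set.Ici 0) → ∀ a b : ℝ, 0 ≤ a → a ≤ b →
      IntervalIntegrable f volume a b := by
    intro f hf a b ha hab
    apply ContinuousOn.intervalIntegrable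
    rw [Set.uIcc_of_le hab]
    exact hf.mono (fun x hx => le_trans ha hx.1)
  have h1c : ContinuousOn (fun t => ⟪σ (u t), u t⟫) (Set.Ici 0) :=
    (hσcont.comp_continuousOn huc).inner huc
  have h2c : ContinuousOn (fun t => (‖z t‖ : ℝ) ^ 2) (Set.Ici 0) := (hzc.norm).pow 2
  have h3c : ContinuousOn (fun t => ⟪S (w t - M (z t)), w t - M (z t)⟫) (Set.Ici 0) :=
    (S.continuous.comp_continuousOn hec).inner hec
  have hσnn : ∀ t : ℝ, 0 ≤ ⟪σ (u t), u t⟫ := by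
    intro t
    have h := hσmono (u t) 0
    simpa [(hσzero 0).mpr rfl] using h
  constructor
  · intro T hT
    have hk := key 0 T le_rfl hT
    have i1 := hint _ h2c 0 T le_rfl hT
    have i2 := hint _ h1c 0 T le_rfl hT
    have i3 := hint _ h3c 0 T le_rfl hT
    have hsplit : (∫ s in (0:ℝ)..T, g s)
        = -(∫ s in (0:ℝ)..T, ‖z s‖ ^ 2) - 2 * (∫ s in (0:ℝ)..T, ⟪σ (u s), u s⟫)
          + 2 * (∫ s in (0:ℝ)..T, ⟪S (w s - M (z s)), w s - M (z s)⟫) := by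
      have j1 : IntervalIntegrable (fun s : ℝ => -‖z s‖ ^ 2 - 2 * ⟪σ (u s), u s⟫)
          volume 0 T := (i1.neg).sub (i2.const_mul 2)
      have j2 : IntervalIntegrable
          (fun s : ℝ => 2 * ⟪S (w s - M (z s)), w s - M (z s)⟫) volume 0 T :=
        i3.const_mul 2
      have hadd : (∫ s in (0:ℝ)..T, (-‖z s‖ ^ 2 - 2 * ⟪σ (u s), u s⟫
              + 2 * ⟪S (w s - M (z s)), w s - M (z s)⟫))
          = (∫ s in (0:ℝ)..T, (-‖z s‖ ^ 2 - 2 * ⟪σ (u s), u s⟫))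
            + ∫ s in (0:ℝ)..T, 2 * ⟪S (w s - M (z s)), w s - M (z s)⟫ :=
        intervalIntegral.integral_add j1 j2
      have hsub : (∫ s in (0:ℝ)..T, (-‖z s‖ ^ 2 - 2 * ⟪σ (u s), u s⟫))
          = (∫ s in (0:ℝ)..T, -‖z s‖ ^ 2) - ∫ s in (0:ℝ)..T, 2 * ⟪σ (u s), u s⟫ :=
        intervalIntegral.integral_sub i1.neg (i2.const_mul 2)
      have hneg : (∫ s in (0:ℝ)..T, -‖z s‖ ^ 2) = -∫ s in (0:ℝ)..T, ‖z s‖ ^ 2 :=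
        intervalIntegral.integral_neg
      have hm1 : (∫ s in (0:ℝ)..T, 2 * ⟪σ (u s), u s⟫)
          = 2 * ∫ s in (0:ℝ)..T, ⟪σ (u s), u s⟫ :=
        intervalIntegral.integral_const_mul 2 _
      have hm2 : (∫ s in (0:ℝ)..T, 2 * ⟪S (w s - M (z s)), w s - M (z s)⟫)
          = 2 * ∫ s in (0:ℝ)..T, ⟪S (w s - M (z s)), w s - M (z s)⟫ :=
        intervalIntegral.integral_const_mul 2 _
      simp only [hgdef]
      rw [hadd, hsub, hneg, hm1, hm2]
    have hI3 : (∫ s in (0:ℝ)..T, ⟪S (w s - M (z s)), w s - M (z s)⟫) ≤ 0 := by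
      have h0 : IntervalIntegrable (fun _ : ℝ => (0:ℝ)) volume 0 T := intervalIntegrable_const
      have := intervalIntegral.integral_mono_on hT i3 h0 (fun x _ => hS _)
      simpa using this
    show V T + (∫ s in (0:ℝ)..T, ‖z s‖ ^ 2) + 2 * (∫ s in (0:ℝ)..T, ⟪σ (u s), u s⟫) ≤ V 0
    linarith
  · intro a ha b hb hab
    have hk := key a b ha hab
    have hgnonpos : ∀ x ∈ Set.Icc a b, g x ≤ 0 := by
      intro x _
      have h1 := hσnn x
      have h2 := hS (w x - M (z x))
      have h3 : (0:ℝ) ≤ ‖z x‖ ^ 2 := sq_nonneg _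
      simp only [hgdef]
      linarith
    have hgint := hint _ hgc a b ha hab
    have h0 : IntervalIntegrable (fun _ : ℝ => (0:ℝ)) volume a b := intervalIntegrable_const
    have hI : (∫ s in a..b, g s) ≤ 0 := by
      have := intervalIntegral.integral_mono_on hab hgint h0 hgnonpos
      simpa using this
    show V b ≤ V a
    linarith
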